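/- Let U ⊆ ℝⁿ be open and bounded, let f : closure(U) → ℝ be continuous and nonnegative, and set A = {x ∈ U : f(x) = 0}. If u and v are viscosity solutions of |Du| = f in U with zero Dirichlet boundary data and u = v on A, then u = v on U. -/

import Mathlib

open Filter Set Real

/-- A bounded uniformly continuous function `u` on `closure U` is a viscosity
subsolution of `|Du| = f` in `U` with zero Dirichlet boundary data if `u ≤ 0` on `∂U`
and whenever `φ` is continuously differentiable and `u - φ` attains a local maximum at
`x₀ ∈ U`, then `‖Dφ(x₀)‖ ≤ f(x₀)`. -/
def IsViscositySubsolutionEikonal (n : ℕ) (U : Set (EuclideanSpace ℝ (Fin n)))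
    (f u : EuclideanSpace ℝ (Fin n) → ℝ) : Prop :=
  (∀ x ∈ frontier U, u x ≤ 0) ∧
    ∀ φ : EuclideanSpace ℝ (Fin n) → ℝ, ContDiff ℝ 1 φ →
      ∀ x₀ ∈ U, IsLocalMax (fun x => u x - φ x) x₀ → ‖fderiv ℝ φ x₀‖ ≤ f x₀

/-- Viscosity supersolution of `|Du| = f` in `U` with zero Dirichlet boundary data. -/
def IsViscositySupersolutionEikonal (n : ℕ) (U : Set (EuclideanSpace ℝ (Fin n)))
    (f u : EuclideanSpace ℝ (Fin n) → ℝ) : Prop :=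
  (∀ x ∈ frontier U, 0 ≤ u x) ∧
    ∀ φ : EuclideanSpace ℝ (Fin n) → ℝ, ContDiff ℝ 1 φ →
      ∀ x₀ ∈ U, IsLocalMin (fun x => u x - φ x) x₀ → f x₀ ≤ ‖fderiv ℝ φ x₀‖

/-- Viscosity solution of `|Du| = f` in `U` with zero Dirichlet boundary data:
a bounded, uniformly continuous function on `closure U` that is both a viscosity
subsolution and a viscosity supersolution. -/
def IsViscositySolutionEikonal (n : ℕ) (U : Set (EuclideanSpace ℝ (Fin n)))
    (f u : EuclideanSpace ℝ (Fin n) → ℝ) : Prop :=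
  UniformContinuousOn u (closure U) ∧ Bornology.IsBounded (u '' closure U) ∧
    IsViscositySubsolutionEikonal n U f u ∧ IsViscositySupersolutionEikonal n U f u


lemma hasFDerivAt_const_mul_normSq {n : ℕ} (c : ℝ) (a x : EuclideanSpace ℝ (Fin n)) :
    HasFDerivAt (fun y => c * ‖y - a‖ ^ 2)
      (innerSL ℝ ((2 * c) • (x - a))) x := by
  have h := (((hasFDerivAt_id x).sub_const a).norm_sq).const_mul c
  refine h.congr_fderiv ?_
  ext w
  simp [real_inner_smul_left, two_smul]
  ring

lemma norm_innerSL_smul {n : ℕ} (c : ℝ) (z : EuclideanSpace ℝ (Fin n)) :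
    ‖innerSL ℝ (c • z)‖ = |c| * ‖z‖ := by
  rw [innerSL_apply_norm, norm_smul, Real.norm_eq_abs]

lemma eikonal_comparison
    (n : ℕ) (U : Set (EuclideanSpace ℝ (Fin n)))
    (hUopen : IsOpen U) (hUbdd : Bornology.IsBounded U)
    (f : EuclideanSpace ℝ (Fin n) → ℝ)
    (hf : ContinuousOn f (closure U)) (hf0 : ∀ x ∈ closure U, 0 ≤ f x)
    (u v : EuclideanSpace ℝ (Fin n) → ℝ)
    (hu : IsViscositySolutionEikonal n U f u)
    (hv : IsViscositySolutionEikonal n U f v)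
    (hA : ∀ x ∈ U, f x = 0 → u x = v x) :
    ∀ x ∈ U, u x ≤ v x := by
  by_contra hcon
  push_neg at hcon
  obtain ⟨x₀, hx₀U, hx₀⟩ := hcon
  obtain ⟨huc, hubd, husub, husup⟩ := hu
  obtain ⟨hvc, hvbd, hvsub, hvsup⟩ := hv
  set K := closure U with hKdef
  have hK : IsCompact K := Metric.isCompact_iff_isClosed_bounded.2
    ⟨isClosed_closure, hUbdd.closure⟩
  have hUK : U ⊆ K := subset_closure
  have hcu : ContinuousOn u K := huc.continuousOn
  have hcv : ContinuousOn v K := hvc.continuousOn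
  -- boundary values
  have hubv : ∀ x ∈ frontier U, u x = 0 := fun x hx =>
    le_antisymm (husub.1 x hx) (husup.1 x hx)
  have hvbv : ∀ x ∈ frontier U, v x = 0 := fun x hx =>
    le_antisymm (hvsub.1 x hx) (hvsup.1 x hx)
  -- bounds
  obtain ⟨Cu, hCu⟩ := isBounded_iff_forall_norm_le.mp hubd
  obtain ⟨Cv, hCv⟩ := isBounded_iff_forall_norm_le.mp hvbd
  obtain ⟨C, hC1, hCu', hCv'⟩ :
      ∃ C : ℝ, 1 ≤ C ∧ (∀ x ∈ K, |u x| ≤ C) ∧ (∀ x ∈ K, |v x| ≤ C) := by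
    refine ⟨|Cu| + |Cv| + 1, by
      have h2 := abs_nonneg Cu
      have h3 := abs_nonneg Cv
      linarith, fun x hx => ?_, fun x hx => ?_⟩
    · have h1 := hCu (u x) (mem_image_of_mem u hx)
      rw [Real.norm_eq_abs] at h1
      have h2 := le_abs_self Cu
      have h3 := abs_nonneg Cv
      linarith
    · have h1 := hCv (v x) (mem_image_of_mem v hx)
      rw [Real.norm_eq_abs] at h1
      have h2 := le_abs_self Cv
      have h3 := abs_nonneg Cu
      linarith
  have hC0 : (0:ℝ) < C := by linarith
  -- max of u - v
  obtain ⟨xh, hxhK, hxhmax⟩ := hK.exists_isMaxOn ⟨x₀, hUK hx₀U⟩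
    (hcu.sub hcv : ContinuousOn (fun x => u x - v x) K)
  have hxhmax' : ∀ x ∈ K, u x - v x ≤ u xh - v xh := isMaxOn_iff.mp hxhmax
  obtain ⟨M, hMdef⟩ : ∃ M : ℝ, M = u xh - v xh := ⟨_, rfl⟩
  have hgmax : ∀ x ∈ K, u x - v x ≤ M := by rw [hMdef]; exact hxhmax'
  have hM0 : 0 < M := by
    have := hxhmax' x₀ (hUK hx₀U)
    rw [hMdef]; linarith
  -- points where the max is attained lie in U
  have hmaxU : ∀ x ∈ K, M ≤ u x - v x → x ∈ U := by
    intro x hxK hMx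
    by_contra hxU
    have hxfr : x ∈ frontier U := by
      rw [hUopen.frontier_eq]; exact ⟨hxK, hxU⟩
    have h1 := hubv x hxfr
    have h2 := hvbv x hxfr
    rw [h1, h2] at hMx
    linarith
  -- min of f over the max set is positive
  obtain ⟨Eset, hEdef⟩ : ∃ E : Set (EuclideanSpace ℝ (Fin n)),
      E = {x | x ∈ K ∧ M ≤ u x - v x} := ⟨_, rfl⟩
  have hEK : Eset ⊆ K := by rw [hEdef]; exact fun x hx => hx.1
  have hEmem : ∀ x, x ∈ Eset ↔ (x ∈ K ∧ M ≤ u x - v x) := by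
    intro x; rw [hEdef]; rfl
  have hEclosed : IsClosed Eset := by
    have h := ((hcu.sub hcv).preimage_isClosed_of_isClosed
      (isClosed_closure (s := U)) (isClosed_Ici (a := M)))
    rw [hEdef]
    have hset : {x | x ∈ K ∧ M ≤ u x - v x}
        = closure U ∩ (fun x => u x - v x) ⁻¹' Ici M := by
      ext x
      simp only [mem_setOf_eq, mem_inter_iff, mem_preimage, mem_Ici, hKdef]
    rw [hset]
    exact h
  have hEcomp : IsCompact Eset := hK.of_isClosed_subset hEclosed hEK
  have hEne : Eset.Nonempty := ⟨xh, (hEmem xh).2 ⟨hxhK, le_of_eq hMdef⟩⟩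
  obtain ⟨e₀, he₀E, he₀min⟩ := hEcomp.exists_isMinOn hEne (hf.mono hEK)
  have he₀min' : ∀ x ∈ Eset, f e₀ ≤ f x := isMinOn_iff.mp he₀min
  obtain ⟨δ, hδdef⟩ : ∃ δ : ℝ, δ = f e₀ := ⟨_, rfl⟩
  have hδmin : ∀ x ∈ Eset, δ ≤ f x := by rw [hδdef]; exact he₀min'
  have hδ0 : 0 < δ := by
    obtain ⟨he₀K, he₀M⟩ := (hEmem e₀).1 he₀E
    have he₀U : e₀ ∈ U := hmaxU e₀ he₀K he₀M
    rcases lt_or_eq_of_le (hf0 e₀ he₀K) with h | h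
    · rw [hδdef]; exact h
    · exfalso
      have := hA e₀ he₀U h.symm
      rw [this, sub_self] at he₀M
      linarith
  -- quantitative neighborhood of the max set
  have hηex : ∃ η > 0, ∀ x ∈ K, M - η ≤ u x - v x → x ∈ U ∧ δ/2 < f x := by
    obtain ⟨T, hTdef⟩ : ∃ T : Set (EuclideanSpace ℝ (Fin n)),
        T = {x | x ∈ K ∧ (x ∉ U ∨ f x ≤ δ/2)} := ⟨_, rfl⟩
    have hTmem : ∀ x, x ∈ T ↔ (x ∈ K ∧ (x ∉ U ∨ f x ≤ δ/2)) := by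
      intro x; rw [hTdef]; rfl
    have hTK : T ⊆ K := fun x hx => ((hTmem x).1 hx).1
    have hTg : ∀ x ∈ T, u x - v x < M := by
      intro x hxT
      obtain ⟨hxK, hxor⟩ := (hTmem x).1 hxT
      rcases lt_or_eq_of_le (hgmax x hxK) with h | h
      · exact h
      · exfalso
        have hxE : x ∈ Eset := (hEmem x).2 ⟨hxK, le_of_eq h.symm⟩
        have hxU : x ∈ U := hmaxU x hxK (le_of_eq h.symm)
        have hfx : δ ≤ f x := hδmin x hxE
        rcases hxor with h' | h'
        · exact h' hxU
        · linarith
    have hnotT : ∀ x ∈ K, x ∉ T → x ∈ U ∧ δ/2 < f x := by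
      intro x hxK hxT
      by_cases hxU : x ∈ U
      · refine ⟨hxU, ?_⟩
        by_contra h
        push_neg at h
        exact hxT ((hTmem x).2 ⟨hxK, Or.inr h⟩)
      · exact absurd ((hTmem x).2 ⟨hxK, Or.inl hxU⟩) hxT
    rcases T.eq_empty_or_nonempty with hT0 | hTne
    · refine ⟨1, one_pos, fun x hxK _ => hnotT x hxK ?_⟩
      rw [hT0]; exact notMem_empty x
    · have hTclosed : IsClosed T := by
        have h1 : IsClosed (K \ U) := isClosed_closure.sdiff hUopen
        have h2 : IsClosed (K ∩ f ⁻¹' Iic (δ/2)) :=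
          hf.preimage_isClosed_of_isClosed isClosed_closure isClosed_Iic
        have : T = (K \ U) ∪ (K ∩ f ⁻¹' Iic (δ/2)) := by
          rw [hTdef]
          ext x
          simp only [mem_setOf_eq, mem_union, mem_diff, mem_inter_iff,
            mem_preimage, mem_Iic]
          tauto
        rw [this]; exact h1.union h2
      have hTcomp : IsCompact T := hK.of_isClosed_subset hTclosed hTK
      obtain ⟨t₀, ht₀T, ht₀max⟩ := hTcomp.exists_isMaxOn hTne
        ((hcu.sub hcv).mono hTK)
      have ht₀max' : ∀ x ∈ T, u x - v x ≤ u t₀ - v t₀ := isMaxOn_iff.mp ht₀max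
      have ht₀ : u t₀ - v t₀ < M := hTg t₀ ht₀T
      refine ⟨(M - (u t₀ - v t₀))/2, by linarith, fun x hxK hgx => hnotT x hxK ?_⟩
      intro hxT
      have := ht₀max' x hxT
      linarith
  obtain ⟨η, hη0, hηprop⟩ := hηex
  -- choose the scaling parameter σ, θ = 1 - σ
  obtain ⟨σ, hσdef⟩ : ∃ σ : ℝ, σ = min (1/2 : ℝ) (η/(16*C)) := ⟨_, rfl⟩
  have hσ0 : 0 < σ := by
    rw [hσdef]; exact lt_min (by norm_num) (by positivity)
  have hσhalf : σ ≤ 1/2 := by rw [hσdef]; exact min_le_left _ _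
  have hσC : σ * C ≤ η/16 := by
    have h1 : σ ≤ η/(16*C) := by rw [hσdef]; exact min_le_right _ _
    have h2 : σ * C ≤ (η/(16*C)) * C := mul_le_mul_of_nonneg_right h1 (le_of_lt hC0)
    have h3 : (η/(16*C)) * C = η/16 := by field_simp
    linarith
  have hθ0 : 0 < 1 - σ := by linarith
  -- moduli of continuity
  obtain ⟨du, hdu0, hdu⟩ := Metric.uniformContinuousOn_iff.mp huc (η/8) (by positivity)
  obtain ⟨dv, hdv0, hdv⟩ := Metric.uniformContinuousOn_iff.mp hvc (η/8) (by positivity)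
  have hfu : UniformContinuousOn f K := hK.uniformContinuousOn_of_continuous hf
  obtain ⟨df, hdf0, hdf⟩ := Metric.uniformContinuousOn_iff.mp hfu (σ*(δ/2)) (by positivity)
  obtain ⟨d, hddef⟩ : ∃ d : ℝ, d = min du (min dv df) := ⟨_, rfl⟩
  have hd0 : 0 < d := by rw [hddef]; exact lt_min hdu0 (lt_min hdv0 hdf0)
  have hddu : d ≤ du := by rw [hddef]; exact min_le_left _ _
  have hddv : d ≤ dv := by rw [hddef]; exact le_trans (min_le_right _ _) (min_le_left _ _)
  have hddf : d ≤ df := by rw [hddef]; exact le_trans (min_le_right _ _) (min_le_right _ _)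
  obtain ⟨ε, hεdef⟩ : ∃ ε : ℝ, ε = d^2/(12*C) := ⟨_, rfl⟩
  have hε0 : 0 < ε := by rw [hεdef]; positivity
  obtain ⟨c₀, hc₀def⟩ : ∃ c : ℝ, c = 1/(2*ε) := ⟨_, rfl⟩
  have hc₀0 : 0 < c₀ := by rw [hc₀def]; positivity
  -- the doubled functional
  set Φ : EuclideanSpace ℝ (Fin n) × EuclideanSpace ℝ (Fin n) → ℝ :=
    fun p => (1-σ) * u p.1 - v p.2 - c₀ * ‖p.1 - p.2‖^2 with hΦdef
  have hΦc : ContinuousOn Φ (K ×ˢ K) := by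
    apply ContinuousOn.sub
    apply ContinuousOn.sub
    · exact continuousOn_const.mul (hcu.comp continuous_fst.continuousOn
        fun p hp => hp.1)
    · exact hcv.comp continuous_snd.continuousOn fun p hp => hp.2
    · exact (continuous_const.mul
        (((continuous_fst.sub continuous_snd).norm).pow 2)).continuousOn
  obtain ⟨⟨xs, ys⟩, hpK, hpmax⟩ := (hK.prod hK).exists_isMaxOn
    ⟨(xh, xh), mk_mem_prod hxhK hxhK⟩ hΦc
  have hxsK : xs ∈ K := hpK.1
  have hysK : ys ∈ K := hpK.2
  have hpmax' : ∀ p ∈ K ×ˢ K, Φ p ≤ Φ (xs, ys) := isMaxOn_iff.mp hpmax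
  obtain ⟨s, hsdef⟩ : ∃ s : ℝ, s = ‖xs - ys‖ := ⟨_, rfl⟩
  have hs0 : 0 ≤ s := hsdef ▸ norm_nonneg _
  -- the basic lower bound
  have h1 : M - σ*C ≤ (1-σ) * u xs - v ys - c₀ * s^2 := by
    have hxx := hpmax' (xh, xh) (mk_mem_prod hxhK hxhK)
    simp only [hΦdef] at hxx
    rw [sub_self, norm_zero] at hxx
    rw [← hsdef] at hxx
    have hub : σ * u xh ≤ σ * C :=
      mul_le_mul_of_nonneg_left (le_trans (le_abs_self _) (hCu' xh hxhK)) (le_of_lt hσ0)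
    rw [hMdef]
    linarith
  -- the penalty is small
  have h2 : c₀ * s^2 ≤ 3*C := by
    have ha := hCu' xs hxsK
    have hb := hCv' ys hysK
    have h3 : (1-σ) * u xs ≤ C := by
      have hp := mul_le_mul_of_nonneg_left (le_trans (le_abs_self _) ha) (le_of_lt hθ0)
      have hq : 0 ≤ σ * C := mul_nonneg (le_of_lt hσ0) (le_of_lt hC0)
      linarith
    have h4 : -C ≤ v ys := by linarith [neg_abs_le (v ys)]
    have hq : 0 ≤ σ * C := mul_nonneg (le_of_lt hσ0) (le_of_lt hC0)
    have hqq : σ * C ≤ C := by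
      have := mul_le_mul_of_nonneg_right (show σ ≤ 1 by linarith) (le_of_lt hC0)
      linarith
    linarith
  have hsd : s < d := by
    have hss : s^2 ≤ 3*C*(2*ε) := by
      rw [hc₀def] at h2
      have h2ε : (0:ℝ) < 2*ε := by linarith
      have hm := mul_le_mul_of_nonneg_right h2 (le_of_lt h2ε)
      have hkey : 1/(2*ε) * s^2 * (2*ε) = s^2 := by field_simp
      linarith
    have hs2 : s^2 ≤ d^2/2 := by
      have hCne : C ≠ 0 := ne_of_gt hC0
      have : 3*C*(2*ε) = d^2/2 := by rw [hεdef]; field_simp; ring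
      linarith
    by_contra hcon2
    push_neg at hcon2
    have hd2 : d^2 ≤ s^2 := pow_le_pow_left₀ (le_of_lt hd0) hcon2 2
    have hdd : 0 < d^2 := pow_pos hd0 2
    linarith
  -- continuity consequences
  have hdist : dist xs ys < d := by rw [dist_eq_norm, ← hsdef]; exact hsd
  have huxy : |u xs - u ys| < η/8 := by
    have := hdu xs hxsK ys hysK (lt_of_lt_of_le hdist hddu)
    rwa [Real.dist_eq] at this
  have hvxy : |v xs - v ys| < η/8 := by
    have := hdv xs hxsK ys hysK (lt_of_lt_of_le hdist hddv)
    rwa [Real.dist_eq] at this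
  have hfxy : |f xs - f ys| < σ*(δ/2) := by
    have := hdf xs hxsK ys hysK (lt_of_lt_of_le hdist hddf)
    rwa [Real.dist_eq] at this
  -- both points are near the max set
  have hc₀s : 0 ≤ c₀ * s^2 := by positivity
  have hgxs : M - η ≤ u xs - v xs := by
    have ha : -(σ*C) ≤ σ * u xs := by
      have hm2 := mul_le_mul_of_nonneg_left
        (show -C ≤ u xs from le_trans (neg_le_neg (hCu' xs hxsK)) (neg_abs_le (u xs)))
        (le_of_lt hσ0)
      have hm3 : σ * -C = -(σ*C) := by ring
      linarith
    have hb : -(η/8) ≤ v ys - v xs := by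
      have := abs_le.mp (le_of_lt hvxy)
      linarith [this.1]
    have hσC8 : σ * C ≤ η/8 := by linarith
    linarith
  have hgys : M - η ≤ u ys - v ys := by
    have ha : u xs - η/8 ≤ u ys := by
      have := abs_le.mp (le_of_lt huxy)
      linarith [this.1]
    have hb : (1-σ) * u xs - σ*C ≤ u xs := by
      have hm2 := mul_le_mul_of_nonneg_left
        (show -C ≤ u xs from le_trans (neg_le_neg (hCu' xs hxsK)) (neg_abs_le (u xs)))
        (le_of_lt hσ0)
      have hm3 : σ * -C = -(σ*C) := by ring
      linarith
    have hσC8 : σ * C ≤ η/8 := by linarith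
    linarith
  obtain ⟨hxsU, hfxs⟩ := hηprop xs hxsK hgxs
  obtain ⟨hysU, hfys⟩ := hηprop ys hysK hgys
  -- subsolution test at xs
  obtain ⟨c₁, hc₁def⟩ : ∃ c : ℝ, c = c₀ / (1-σ) := ⟨_, rfl⟩
  have hc₁0 : 0 < c₁ := by rw [hc₁def]; positivity
  have hθc₁ : (1-σ) * c₁ = c₀ := by
    rw [hc₁def]; field_simp
  have hmax₁ : IsLocalMax (fun x => u x - c₁ * ‖x - ys‖^2) xs := by
    filter_upwards [hUopen.mem_nhds hxsU] with x hxU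
    have hx := hpmax' (x, ys) (mk_mem_prod (hUK hxU) hysK)
    simp only [hΦdef] at hx
    rw [← hsdef] at hx
    have key : (1-σ) * (u x - c₁ * ‖x - ys‖^2) ≤ (1-σ) * (u xs - c₁ * s^2) := by
      have e1 : (1-σ) * (u x - c₁ * ‖x - ys‖^2)
          = (1-σ) * u x - ((1-σ)*c₁) * ‖x - ys‖^2 := by ring
      have e2 : (1-σ) * (u xs - c₁ * s^2)
          = (1-σ) * u xs - ((1-σ)*c₁) * s^2 := by ring
      rw [e1, e2, hθc₁]
      linarith
    have := (mul_le_mul_iff_right₀ hθ0).mp key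
    simpa only [hsdef] using this
  have hsub := husub.2 (fun x => c₁ * ‖x - ys‖^2)
    (contDiff_const.mul ((contDiff_id.sub contDiff_const).norm_sq ℝ))
    xs hxsU hmax₁
  have hD₁ : fderiv ℝ (fun x => c₁ * ‖x - ys‖^2) xs
      = innerSL ℝ ((2*c₁) • (xs - ys)) :=
    (hasFDerivAt_const_mul_normSq c₁ ys xs).fderiv
  have hsub' : 2*c₁*s ≤ f xs := by
    rw [hD₁, norm_innerSL_smul, ← hsdef] at hsub
    have habs : |2*c₁| = 2*c₁ := abs_of_pos (by linarith)
    rw [habs] at hsub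
    exact hsub
  -- supersolution test at ys
  have hmin₂ : IsLocalMin (fun y => v y - (-c₀) * ‖y - xs‖^2) ys := by
    filter_upwards [hUopen.mem_nhds hysU] with y hyU
    have hy := hpmax' (xs, y) (mk_mem_prod hxsK (hUK hyU))
    simp only [hΦdef] at hy
    rw [← hsdef] at hy
    have hrev : ‖xs - y‖ = ‖y - xs‖ := norm_sub_rev _ _
    rw [hrev] at hy
    have hrev2 : ‖ys - xs‖ = s := by rw [hsdef, norm_sub_rev]
    rw [hrev2]
    linarith
  have hsup := hvsup.2 (fun y => (-c₀) * ‖y - xs‖^2)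
    (contDiff_const.mul ((contDiff_id.sub contDiff_const).norm_sq ℝ))
    ys hysU hmin₂
  have hD₂ : fderiv ℝ (fun y => (-c₀) * ‖y - xs‖^2) ys
      = innerSL ℝ ((2*(-c₀)) • (ys - xs)) :=
    (hasFDerivAt_const_mul_normSq (-c₀) xs ys).fderiv
  have hsup' : f ys ≤ 2*c₀*s := by
    rw [hD₂, norm_innerSL_smul] at hsup
    have h1' : |2*(-c₀)| = 2*c₀ := by rw [abs_of_neg (by linarith)]; ring
    have h2' : ‖ys - xs‖ = s := by rw [hsdef, norm_sub_rev]
    rw [h1', h2'] at hsup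
    exact hsup
  -- contradiction
  have hchain : f ys ≤ (1-σ) * f xs := by
    have he : 2*c₀*s = (1-σ) * (2*c₁*s) := by rw [← hθc₁]; ring
    rw [he] at hsup'
    have := mul_le_mul_of_nonneg_left hsub' (le_of_lt hθ0)
    linarith
  have habs : f xs - f ys < σ*(δ/2) := lt_of_abs_lt hfxy
  have hprod : σ*(δ/2) < σ * f xs := mul_lt_mul_of_pos_left hfxs hσ0
  linarith

/-- let `U ⊆ ℝⁿ` be open and bounded, `f` continuous and nonnegative on
`closure U`, and `A = {x ∈ U : f x = 0}`. If `u` and `v` are viscosity solutions of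
`|Du| = f` in `U` with zero Dirichlet boundary data and `u = v` on `A`, then `u = v`
on `U`. -/
theorem eikonal_uniqueness_on_zero_set
    (n : ℕ) (U : Set (EuclideanSpace ℝ (Fin n)))
    (hUopen : IsOpen U) (hUbdd : Bornology.IsBounded U)
    (f : EuclideanSpace ℝ (Fin n) → ℝ)
    (hf : ContinuousOn f (closure U)) (hf0 : ∀ x ∈ closure U, 0 ≤ f x)
    (u v : EuclideanSpace ℝ (Fin n) → ℝ)
    (hu : IsViscositySolutionEikonal n U f u)
    (hv : IsViscositySolutionEikonal n U f v)
    (hA : ∀ x ∈ U, f x = 0 → u x = v x) :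
    ∀ x ∈ U, u x = v x := by
  intro x hx
  exact le_antisymm
    (eikonal_comparison n U hUopen hUbdd f hf hf0 u v hu hv hA x hx)
    (eikonal_comparison n U hUopen hUbdd f hf hf0 v u hv hu
      (fun y hy h => (hA y hy h).symm) x hx)
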